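/- Let X be a non-negative absolutely continuous random variable with probability density function f, differential entropy H_X = -E[log f(X)], and weighted entropy H^w_X = -E[X log f(X)]. Then for all a > 0 and b > 0, the weighted entropy of aX + b satisfies H^w_{aX+b} = a(H^w_X + E(X) log a) + b(H_X + log a). -/

import Mathlib

open MeasureTheory

/-- For a non-negative absolutely continuous random variable `X` with
density `f`, differential entropy `H_X = -E[log f(X)]` and weighted entropy
`H^w_X = -E[X log f(X)]`, and for `a, b > 0`, the random variable `aX + b`
(whose density is `y ↦ (1/a) f((y-b)/a)`) has weighted entropy
`H^w_{aX+b} = a (H^w_X + E(X) log a) + b (H_X + log a)`. -/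
theorem weighted_entropy_affine (f : ℝ → ℝ) (a b : ℝ) (ha : 0 < a) (hb : 0 < b)
    (hf_nonneg : ∀ x, 0 ≤ f x) (hf_supp : ∀ x, x < 0 → f x = 0)
    (hf_dens : ∫ x, f x = 1)
    (hmean : Integrable (fun x => x * f x))
    (hent : Integrable (fun x => f x * Real.log (f x)))
    (hwent : Integrable (fun x => x * f x * Real.log (f x))) :
    -∫ y, y * (1 / a * f ((y - b) / a)) * Real.log (1 / a * f ((y - b) / a))
      = a * ((-∫ x, x * f x * Real.log (f x)) + (∫ x, x * f x) * Real.log a)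
        + b * ((-∫ x, f x * Real.log (f x)) + Real.log a) := by
  have ha' : a ≠ 0 := ne_of_gt ha
  have hf_int : Integrable f := by
    by_contra h
    rw [integral_undef h] at hf_dens
    norm_num at hf_dens
  set G : ℝ → ℝ := fun x => (a * x + b) * (1 / a * f x) * Real.log (1 / a * f x) with hG
  have h1 : (∫ y, y * (1 / a * f ((y - b) / a)) * Real.log (1 / a * f ((y - b) / a)))
      = ∫ y, G ((y - b) / a) := by
    congr 1
    ext y
    simp only [hG]
    congr 2
    field_simp
    ring
  have h2 : (∫ y, G ((y - b) / a)) = |a| • ∫ x, G x := by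
    have h := integral_sub_right_eq_self (μ := volume) (fun z => G (z / a)) b
    rw [h]
    exact MeasureTheory.Measure.integral_comp_div G a
  have hGeq : ∀ x, G x = x * f x * Real.log (f x) + (b/a) * (f x * Real.log (f x))
      - Real.log a * (x * f x) - (b/a) * Real.log a * f x := by
    intro x
    simp only [hG]
    rcases eq_or_lt_of_le (hf_nonneg x) with h0 | h0
    · simp [← h0]
    · rw [Real.log_mul (by positivity) (ne_of_gt h0), Real.log_div one_ne_zero ha',
        Real.log_one]
      field_simp
      ring
  have h3 : (∫ x, G x) = (∫ x, x * f x * Real.log (f x)) + (b/a) * (∫ x, f x * Real.log (f x))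
      - Real.log a * (∫ x, x * f x) - (b/a) * Real.log a * (∫ x, f x) := by
    have i2 : Integrable (fun x => (b/a) * (f x * Real.log (f x))) := hent.const_mul _
    have i3 : Integrable (fun x => Real.log a * (x * f x)) := hmean.const_mul _
    have i4 : Integrable (fun x => (b/a) * Real.log a * f x) := hf_int.const_mul _
    have i12 : Integrable (fun x => x * f x * Real.log (f x)
        + (b/a) * (f x * Real.log (f x))) := hwent.add i2
    have i123 : Integrable (fun x => x * f x * Real.log (f x)
        + (b/a) * (f x * Real.log (f x)) - Real.log a * (x * f x)) := i12.sub i3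
    simp_rw [hGeq]
    rw [integral_sub i123 i4, integral_sub i12 i3, integral_add hwent i2,
      integral_const_mul, integral_const_mul, integral_const_mul]
  rw [h1, h2, h3, hf_dens, abs_of_pos ha]
  field_simp
  linear_combination (-(∫ x, x * f x * Real.log (f x)) * a - b * (∫ x, f x * Real.log (f x))
    + b * Real.log a + a * Real.log a * (∫ x, x * f x)) * mul_inv_cancel₀ ha'
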